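/- For the two-way within-transformation matrix J: Σ_r (J_rr)² = N*²/N and Σ_r Σ_s (J_rs)⁴ = N*·( N*³ + (n−1)³ + (T−1)³ + 1 ) / N³. -/

import Mathlib

open Matrix Finset
open scoped Kronecker

/-- The two-way within-transformation matrix
`J = (I_T − T⁻¹ι_Tι_T′) ⊗ (I_n − n⁻¹ι_nι_n′)`. -/
noncomputable def twoWayJ (n T : ℕ) : Matrix (Fin T × Fin n) (Fin T × Fin n) ℝ :=
  ((1 : Matrix (Fin T) (Fin T) ℝ) - (T : ℝ)⁻¹ • Matrix.of (fun _ _ => (1 : ℝ))) ⊗ₖ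
  ((1 : Matrix (Fin n) (Fin n) ℝ) - (n : ℝ)⁻¹ • Matrix.of (fun _ _ => (1 : ℝ)))

noncomputable def oneFactor (m : ℕ) : Matrix (Fin m) (Fin m) ℝ :=
  (1 : Matrix (Fin m) (Fin m) ℝ) - (m : ℝ)⁻¹ • Matrix.of (fun _ _ => (1 : ℝ))

lemma sum_ite_const {m : ℕ} (t : Fin m) (a b : ℝ) :
    ∑ t' : Fin m, (if t = t' then a else b) = (m : ℝ) * b + (a - b) := by
  have h : ∀ t' : Fin m, (if t = t' then a else b) = b + (if t = t' then a - b else 0) := by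
    intro t'; by_cases h : t = t' <;> simp [h]
  rw [Finset.sum_congr rfl (fun t' _ => h t'), Finset.sum_add_distrib,
    Finset.sum_ite_eq, Finset.sum_const]
  simp [mul_comm]

lemma oneFactor_entry (m : ℕ) (t t' : Fin m) :
    oneFactor m t t' = (if t = t' then 1 else 0) - (m : ℝ)⁻¹ := by
  simp [oneFactor, Matrix.sub_apply, Matrix.one_apply, Matrix.smul_apply]

lemma oneFactor_diag_sq (m : ℕ) (hm : 1 ≤ m) :
    ∑ t : Fin m, (oneFactor m t t) ^ 2 = ((m : ℝ) - 1) ^ 2 / m := by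
  have hm0 : (m : ℝ) ≠ 0 := by positivity
  simp only [oneFactor_entry, if_pos rfl, ↓reduceIte, Finset.sum_const, Finset.card_univ, Fintype.card_fin,
    nsmul_eq_mul]
  field_simp

lemma oneFactor_fourth (m : ℕ) (hm : 1 ≤ m) :
    ∑ t : Fin m, ∑ t' : Fin m, (oneFactor m t t') ^ 4
      = ((m : ℝ) - 1) * (((m : ℝ) - 1) ^ 3 + 1) / (m : ℝ) ^ 3 := by
  have hm0 : (m : ℝ) ≠ 0 := by positivity
  have h1 : ∀ t t' : Fin m,
      (oneFactor m t t') ^ 4 = (if t = t' then (1 - (m : ℝ)⁻¹) ^ 4 else ((m : ℝ)⁻¹) ^ 4) := by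
    intro t t'
    rw [oneFactor_entry]
    by_cases h : t = t' <;> simp [h] <;> ring
  simp only [h1, sum_ite_const, Finset.sum_const, Finset.card_univ, Fintype.card_fin,
    nsmul_eq_mul]
  field_simp
  ring

/-- For the two-way within-transformation matrix `J` (with `N = nT`,
`N* = (n−1)(T−1)`): `Σ_r (J_rr)² = N*²/N` and
`Σ_r Σ_s (J_rs)⁴ = N*·(N*³ + (n−1)³ + (T−1)³ + 1)/N³`. -/
theorem twoWayJ_pi1_pi2 (n T : ℕ) (hn : 2 ≤ n) (hT : 2 ≤ T)
    (J : Matrix (Fin T × Fin n) (Fin T × Fin n) ℝ) (hJ : J = twoWayJ n T)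
    (N Nstar : ℕ) (hN : N = n * T) (hNstar : Nstar = (n - 1) * (T - 1)) :
    (∑ r, (J r r) ^ 2 = (Nstar : ℝ) ^ 2 / N) ∧
    (∑ r, ∑ s, (J r s) ^ 4 =
      (Nstar : ℝ) * ((Nstar : ℝ) ^ 3 + ((n : ℝ) - 1) ^ 3 + ((T : ℝ) - 1) ^ 3 + 1)
        / (N : ℝ) ^ 3) := by
  have hn1 : 1 ≤ n := le_trans (by norm_num) hn
  have hT1 : 1 ≤ T := le_trans (by norm_num) hT
  have hn0 : (n : ℝ) ≠ 0 := by positivity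
  have hT0 : (T : ℝ) ≠ 0 := by positivity
  have hNstarR : (Nstar : ℝ) = ((n : ℝ) - 1) * ((T : ℝ) - 1) := by
    subst hNstar; push_cast [Nat.cast_sub hn1, Nat.cast_sub hT1]; ring
  have hNR : (N : ℝ) = (n : ℝ) * (T : ℝ) := by subst hN; push_cast; ring
  subst hJ
  have hentry : ∀ r s : Fin T × Fin n,
      twoWayJ n T r s = oneFactor T r.1 s.1 * oneFactor n r.2 s.2 := by
    intro r s; rfl
  constructor
  · have h : ∑ r : Fin T × Fin n, (twoWayJ n T r r) ^ 2
        = ∑ t : Fin T, ∑ i : Fin n, (oneFactor T t t) ^ 2 * (oneFactor n i i) ^ 2 := by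
      rw [Fintype.sum_prod_type]
      exact Finset.sum_congr rfl fun t _ => Finset.sum_congr rfl fun i _ => by
        rw [hentry]; ring
    rw [h, ← Fintype.sum_mul_sum, oneFactor_diag_sq T hT1, oneFactor_diag_sq n hn1, hNstarR, hNR]
    field_simp
  · have h : ∑ r : Fin T × Fin n, ∑ s : Fin T × Fin n, (twoWayJ n T r s) ^ 4
        = ∑ t : Fin T, ∑ i : Fin n, ∑ t' : Fin T, ∑ j : Fin n,
            (oneFactor T t t') ^ 4 * (oneFactor n i j) ^ 4 := by
      rw [Fintype.sum_prod_type]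
      refine Finset.sum_congr rfl fun t _ => ?_
      refine Finset.sum_congr rfl fun i _ => ?_
      rw [Fintype.sum_prod_type]
      refine Finset.sum_congr rfl fun t' _ => ?_
      refine Finset.sum_congr rfl fun j _ => ?_
      rw [hentry]; ring
    have h2 : (∑ t : Fin T, ∑ t' : Fin T, (oneFactor T t t') ^ 4)
          * (∑ i : Fin n, ∑ j : Fin n, (oneFactor n i j) ^ 4)
        = ∑ t : Fin T, ∑ i : Fin n, ∑ t' : Fin T, ∑ j : Fin n,
            (oneFactor T t t') ^ 4 * (oneFactor n i j) ^ 4 := by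
      rw [Fintype.sum_mul_sum]
      exact Finset.sum_congr rfl fun t _ => Finset.sum_congr rfl fun i _ =>
        Fintype.sum_mul_sum _ _
    rw [h, ← h2, oneFactor_fourth T hT1, oneFactor_fourth n hn1, hNstarR, hNR]
    field_simp
    ring
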